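/- Let X be a real normed space and x, y ∈ X with x ≠ 0, and write y = βx + z. If for all sufficiently large λ > 0 one has ‖λx − y‖ ≥ λ‖x‖² − 1/λ (with ‖x‖ = 1), then ρ'₋(x, y) ≤ 0. -/

import Mathlib

open Metric Filter Set Topology

/-- If ‖x‖ = 1, y = βx + z, and for all sufficiently large λ > 0 one has
‖λx − y‖ ≥ λ‖x‖² − 1/λ, then ρ'₋(x, y) ≤ 0. -/
theorem stmt18 {X : Type*} [NormedAddCommGroup X] [NormedSpace ℝ X]
    (x y z : X) (β : ℝ) (hx : ‖x‖ = 1) (hy : y = β • x + z)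
    (hbig : ∃ Λ : ℝ, 0 < Λ ∧ ∀ l : ℝ, Λ ≤ l → l * ‖x‖ ^ 2 - 1 / l ≤ ‖l • x - y‖) :
    ∀ ρm : ℝ,
      Tendsto (fun t : ℝ => ‖x‖ * (‖x + t • y‖ - ‖x‖) / t) (𝓝[<] (0 : ℝ)) (𝓝 ρm) →
      ρm ≤ 0 := by
  obtain ⟨Λ, hΛ, hb⟩ := hbig
  intro ρm hρ
  have hneg : Tendsto (fun t : ℝ => -t) (𝓝[<] (0 : ℝ)) (𝓝 (0 : ℝ)) := by
    have : Tendsto (fun t : ℝ => -t) (𝓝 (0 : ℝ)) (𝓝 (-(0:ℝ))) :=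
      continuous_neg.tendsto 0
    simpa using this.mono_left nhdsWithin_le_nhds
  have hev : ∀ᶠ t in 𝓝[<] (0 : ℝ),
      ‖x‖ * (‖x + t • y‖ - ‖x‖) / t ≤ -t := by
    have hmem : Ioo (-(1/Λ)) 0 ∈ 𝓝[<] (0 : ℝ) :=
      Ioo_mem_nhdsLT_of_mem ⟨neg_neg_of_pos (by positivity), le_refl 0⟩
    filter_upwards [hmem] with t ht
    obtain ⟨ht1, ht2⟩ := ht
    set l : ℝ := -1 / t with hl
    have hlΛ : Λ ≤ l := by
      have h := mul_lt_mul_of_pos_left ht1 hΛ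
      rw [mul_neg, mul_one_div, div_self hΛ.ne'] at h
      rw [hl, le_div_iff_of_neg ht2]
      nlinarith
    have hkey := hb l hlΛ
    have hlt : (0:ℝ) < l := lt_of_lt_of_le hΛ hlΛ
    have heq : x + t • y = (-t) • (l • x - y) := by
      rw [smul_sub, smul_smul, hl]
      have : -t * (-1 / t) = 1 := by field_simp [ht2.ne]
      rw [this, one_smul, neg_smul, sub_neg_eq_add]
    have hnorm : 1 - t^2 ≤ ‖x + t • y‖ := by
      rw [heq, norm_smul, Real.norm_eq_abs, abs_of_pos (by linarith : (0:ℝ) < -t)]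
      have h1 : (-t) * l = 1 := by rw [hl]; field_simp [ht2.ne]
      have h2 : (-t) * (1 / l) = t^2 := by rw [hl]; field_simp [ht2.ne]
      have := mul_le_mul_of_nonneg_left hkey (by linarith : (0:ℝ) ≤ -t)
      calc 1 - t^2 = (-t) * (l * ‖x‖^2 - 1/l) := by
            rw [hx]; nlinarith [h1, h2]
        _ ≤ (-t) * ‖l • x - y‖ := this
    rw [hx, one_mul, div_le_iff_of_neg ht2]
    nlinarith [hnorm]
  exact le_of_tendsto_of_tendsto hρ hneg hev
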